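/- arXiv:2412.16436 — 2 statements merged into one kernel-verified Lean document; each statement's English description precedes it below -/
import Mathlib

section
/- Let α ∈ (1/2,1) and T > 0, and let f ∈ L^1((0,T];ℝ) satisfy either sup_{t∈(0,T]} t^{1−α}|f(t)| < ∞ or sup_{t∈(0,T]} |f(t)| < ∞. Then (V∘f)(t) ≥ 0 for all t ∈ (0,T], and there exists a constant C > 0 (depending on α, γ, ζ, b, c_ν, T and the L^1-norm of f on (0,T]) such that 0 ≤ ((V∘f) * K)(t) ≤ C · (|f|² * K)(t) for all t ∈ (0,T]. -/
open MeasureTheory Set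

/-- Convolution on `(0,t)`: `(f * g)(t) = ∫_0^t f(t-s) g(s) ds`. -/
noncomputable def conv (f g : ℝ → ℝ) (t : ℝ) : ℝ := ∫ s in (0:ℝ)..t, f (t - s) * g s

/-- The nonlinear operator `V∘f` with Lévy measure `ν(dy) = cν y^{-(2+α)} dy`. -/
noncomputable def Vop (α ζ b cν : ℝ) (f : ℝ → ℝ) (t : ℝ) : ℝ :=
  ∫ y in Set.Ioi (0:ℝ),
    (Real.exp (-((ζ / b) * ∫ s in (max (t - y) 0)..t, f s)) - 1
      + (ζ / b) * ∫ s in (max (t - y) 0)..t, f s) * (cν * y ^ (-(2 + α)))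

/-- The fractional kernel `K(t) = γ t^{α-1} / Γ(α)`. -/
noncomputable def fracK (α γ : ℝ) (t : ℝ) : ℝ := γ * t ^ (α - 1) / Real.Gamma α

open scoped ENNReal

lemma aux_nonneg (x : ℝ) : 0 ≤ Real.exp (-x) - 1 + x := by
  have := Real.add_one_le_exp (-x); linarith

lemma aux_abs (s : ℝ) : |1 - Real.exp (-s)| ≤ |s| * Real.exp |s| := by
  rcases le_or_gt 0 s with hs | hs
  · rw [abs_of_nonneg hs, abs_of_nonneg (by simpa using Real.exp_le_one_iff.2 (by linarith : -s ≤ 0))]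
    have h1 := Real.add_one_le_exp (-s)
    have h2 : (1:ℝ) ≤ Real.exp s := Real.one_le_exp hs
    nlinarith
  · rw [abs_of_neg hs, abs_of_nonpos (by simpa using Real.one_le_exp (by linarith : 0 ≤ -s))]
    have h1 := Real.add_one_le_exp s
    have h2 : 0 < Real.exp (-s) := Real.exp_pos _
    have h3 : Real.exp s * Real.exp (-s) = 1 := by
      rw [← Real.exp_add]; simp
    nlinarith [mul_le_mul_of_nonneg_right h1 h2.le]

lemma aux_quad {x A : ℝ} (h : |x| ≤ A) : Real.exp (-x) - 1 + x ≤ x^2 * Real.exp A := by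
  have hA : 0 ≤ A := le_trans (abs_nonneg x) h
  have hderiv : ∀ s ∈ uIcc (0:ℝ) x, HasDerivAt (fun s => Real.exp (-s) - 1 + s) (1 - Real.exp (-s)) s := by
    intro s _
    have h1 : HasDerivAt (fun s : ℝ => Real.exp (-s)) (-Real.exp (-s)) s := by
      simpa [Function.comp_def] using (Real.hasDerivAt_exp (-s)).comp s (hasDerivAt_neg s)
    have : (1 - Real.exp (-s)) = -Real.exp (-s) + 1 := by ring
    rw [this]
    exact ((h1.sub_const 1).add (hasDerivAt_id s))
  have hint : IntervalIntegrable (fun s => 1 - Real.exp (-s)) volume 0 x :=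
    (continuous_const.sub (Real.continuous_exp.comp continuous_neg)).intervalIntegrable _ _
  have heq := intervalIntegral.integral_eq_sub_of_hasDerivAt hderiv hint
  simp only [neg_zero, Real.exp_zero] at heq
  have hbd : ‖∫ s in (0:ℝ)..x, (1 - Real.exp (-s))‖ ≤ (|x| * Real.exp A) * |x - 0| := by
    apply intervalIntegral.norm_integral_le_of_norm_le_const
    intro s hs
    have hs' : |s| ≤ |x| := by
      rcases le_or_gt 0 x with hx | hx
      · rw [uIoc_of_le hx] at hs
        rw [abs_of_pos hs.1, abs_of_nonneg hx]; exact hs.2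
      · rw [uIoc_of_ge hx.le] at hs
        rw [abs_of_nonpos (le_trans hs.2 (le_refl 0)), abs_of_neg hx]; linarith [hs.1, hs.2]
    calc ‖1 - Real.exp (-s)‖ ≤ |s| * Real.exp |s| := aux_abs s
    _ ≤ |x| * Real.exp A := by
        apply mul_le_mul hs' (Real.exp_le_exp.2 (le_trans hs' h)) (Real.exp_pos _).le (abs_nonneg _)
  have hval : Real.exp (-x) - 1 + x = ∫ s in (0:ℝ)..x, (1 - Real.exp (-s)) := by
    rw [heq]; ring
  calc Real.exp (-x) - 1 + x ≤ ‖∫ s in (0:ℝ)..x, (1 - Real.exp (-s))‖ := by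
        rw [← hval, Real.norm_eq_abs]; exact le_abs_self _
  _ ≤ (|x| * Real.exp A) * |x - 0| := hbd
  _ = x^2 * Real.exp A := by rw [sub_zero, pow_two, ← abs_mul_abs_self x]; ring

lemma lint_CS {S : Set ℝ} (h : ℝ → ℝ≥0∞) (hm : AEMeasurable h (volume.restrict S)) :
    (∫⁻ r in S, h r) ^ 2 ≤ volume S * ∫⁻ r in S, (h r) ^ 2 := by
  have hconj : Real.HolderConjugate 2 2 := Real.HolderConjugate.two_two
  have key := ENNReal.lintegral_mul_le_Lp_mul_Lq (volume.restrict S) hconj hm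
    (aemeasurable_const (b := (1:ℝ≥0∞)))
  simp only [Pi.mul_apply, mul_one, ENNReal.one_rpow, lintegral_const,
    Measure.restrict_apply, MeasurableSet.univ, univ_inter, one_mul] at key
  have hsq := ENNReal.rpow_le_rpow key (by norm_num : (0:ℝ) ≤ 2)
  have hrw : ((∫⁻ a in S, h a ^ (2:ℝ)) ^ (1/2:ℝ) * (volume S) ^ (1/2:ℝ)) ^ (2:ℝ)
      = volume S * ∫⁻ a in S, h a ^ (2:ℝ) := by
    rw [ENNReal.mul_rpow_of_nonneg _ _ (by norm_num : (0:ℝ) ≤ 2), ← ENNReal.rpow_mul,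
      ← ENNReal.rpow_mul]
    norm_num [mul_comm]
  rw [hrw] at hsq
  calc (∫⁻ r in S, h r) ^ 2 = (∫⁻ r in S, h r) ^ (2:ℝ) := by
        rw [← ENNReal.rpow_natCast]; norm_num
  _ ≤ volume S * ∫⁻ a in S, h a ^ (2:ℝ) := hsq
  _ = volume S * ∫⁻ r in S, (h r) ^ 2 := by
        congr 1; apply lintegral_congr; intro a; rw [← ENNReal.rpow_natCast]; norm_num

lemma lint_Ioi_rpow {c p : ℝ} (hc : 0 < c) (hp : p < -1) :
    ∫⁻ y in Ioi c, ENNReal.ofReal (y ^ p) = ENNReal.ofReal (-c ^ (p + 1) / (p + 1)) := by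
  rw [← integral_Ioi_rpow_of_lt hp hc]
  rw [ofReal_integral_eq_lintegral_ofReal (integrableOn_Ioi_rpow_of_lt hp hc)]
  exact (ae_restrict_iff' measurableSet_Ioi).2
    (ae_of_all _ fun y hy => Real.rpow_nonneg (le_of_lt (hc.trans hy)) p)

lemma lint_Ioc_rpow {w p : ℝ} (hw : 0 < w) (hp : -1 < p) :
    ∫⁻ s in Ioc 0 w, ENNReal.ofReal (s ^ p) = ENNReal.ofReal (w ^ (p + 1) / (p + 1)) := by
  have hint : IntegrableOn (fun s : ℝ => s ^ p) (Ioc 0 w) :=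
    (intervalIntegrable_iff_integrableOn_Ioc_of_le hw.le).1
      (intervalIntegral.intervalIntegrable_rpow' hp)
  rw [← ofReal_integral_eq_lintegral_ofReal hint
    ((ae_restrict_iff' measurableSet_Ioc).2
      (ae_of_all _ fun s hs => Real.rpow_nonneg hs.1.le p))]
  congr 1
  rw [← intervalIntegral.integral_of_le hw.le, integral_rpow (Or.inl hp),
    Real.zero_rpow (by linarith : p + 1 ≠ 0)]
  ring

lemma lint_Ioc_rpow_sub {a v p : ℝ} (hav : a < v) (hp : -1 < p) :
    ∫⁻ s in Ioc a v, ENNReal.ofReal ((v - s) ^ p)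
      = ENNReal.ofReal ((v - a) ^ (p + 1) / (p + 1)) := by
  have hii : IntervalIntegrable (fun s : ℝ => (v - s) ^ p) volume a v := by
    have h0 : IntervalIntegrable (fun x : ℝ => x ^ p) volume (v - v) (v - a) :=
      (intervalIntegral.intervalIntegrable_rpow' hp (a := v - v) (b := v - a))
    simpa using (h0.comp_sub_left v).symm
  have hint : IntegrableOn (fun s : ℝ => (v - s) ^ p) (Ioc a v) :=
    (intervalIntegrable_iff_integrableOn_Ioc_of_le hav.le).1 hii
  rw [← ofReal_integral_eq_lintegral_ofReal hint
    ((ae_restrict_iff' measurableSet_Ioc).2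
      (ae_of_all _ fun s hs => Real.rpow_nonneg (by linarith [hs.2] : (0:ℝ) ≤ v - s) p))]
  congr 1
  rw [← intervalIntegral.integral_of_le hav.le,
    intervalIntegral.integral_comp_sub_left (fun x : ℝ => x ^ p) v, sub_self,
    integral_rpow (Or.inl hp), Real.zero_rpow (by linarith : p + 1 ≠ 0)]
  ring

lemma beta_bound {α v : ℝ} (hα1 : 0 < α) (hα2 : α < 1) (hv : 0 < v) :
    ∫⁻ s in Ioc 0 v, ENNReal.ofReal (s ^ (α - 1)) * ENNReal.ofReal ((v - s) ^ (-α))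
      ≤ ENNReal.ofReal (1 / α + 1 / (1 - α)) := by
  have hv2 : 0 < v / 2 := by linarith
  have hx : (0:ℝ) < (v / 2) ^ α := Real.rpow_pos_of_pos hv2 α
  have hmeas1 : Measurable fun s : ℝ => ENNReal.ofReal (s ^ (α - 1)) * ENNReal.ofReal ((v / 2) ^ (-α)) :=
    ((measurable_id.pow_const _).ennreal_ofReal.mul_const _)
  have hmeas2 : Measurable fun s : ℝ => ENNReal.ofReal ((v / 2) ^ (α - 1)) * ENNReal.ofReal ((v - s) ^ (-α)) :=
    (((measurable_const.sub measurable_id).pow_const _).ennreal_ofReal.const_mul _)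
  have hsub : Ioc (0:ℝ) v = Ioc 0 (v / 2) ∪ Ioc (v / 2) v := by
    rw [Ioc_union_Ioc_eq_Ioc (by linarith) (by linarith)]
  calc ∫⁻ s in Ioc 0 v, ENNReal.ofReal (s ^ (α - 1)) * ENNReal.ofReal ((v - s) ^ (-α))
      ≤ (∫⁻ s in Ioc 0 (v / 2), ENNReal.ofReal (s ^ (α - 1)) * ENNReal.ofReal ((v - s) ^ (-α)))
        + ∫⁻ s in Ioc (v / 2) v, ENNReal.ofReal (s ^ (α - 1)) * ENNReal.ofReal ((v - s) ^ (-α)) := by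
        rw [hsub]; exact lintegral_union_le _ _ _
  _ ≤ (∫⁻ s in Ioc 0 (v / 2), ENNReal.ofReal (s ^ (α - 1)) * ENNReal.ofReal ((v / 2) ^ (-α)))
        + ∫⁻ s in Ioc (v / 2) v, ENNReal.ofReal ((v / 2) ^ (α - 1)) * ENNReal.ofReal ((v - s) ^ (-α)) := by
      refine add_le_add (setLIntegral_mono hmeas1 fun s hs => ?_) (setLIntegral_mono hmeas2 fun s hs => ?_)
      · refine mul_le_mul_right (ENNReal.ofReal_le_ofReal ?_) _
        exact Real.rpow_le_rpow_of_nonpos hv2 (by linarith [hs.2]) (by linarith)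
      · refine mul_le_mul_left (ENNReal.ofReal_le_ofReal ?_) _
        exact Real.rpow_le_rpow_of_nonpos hv2 hs.1.le (by linarith)
  _ = (∫⁻ s in Ioc 0 (v / 2), ENNReal.ofReal (s ^ (α - 1))) * ENNReal.ofReal ((v / 2) ^ (-α))
        + ENNReal.ofReal ((v / 2) ^ (α - 1)) * ∫⁻ s in Ioc (v / 2) v, ENNReal.ofReal ((v - s) ^ (-α)) := by
      rw [lintegral_mul_const' _ _ ENNReal.ofReal_ne_top, lintegral_const_mul' _ _ ENNReal.ofReal_ne_top]
  _ = ENNReal.ofReal ((v / 2) ^ α / α) * ENNReal.ofReal ((v / 2) ^ (-α))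
        + ENNReal.ofReal ((v / 2) ^ (α - 1)) * ENNReal.ofReal ((v - v / 2) ^ (1 - α) / (1 - α)) := by
      rw [lint_Ioc_rpow hv2 (by linarith : (-1:ℝ) < α - 1), lint_Ioc_rpow_sub (by linarith : v / 2 < v) (by linarith : (-1:ℝ) < -α)]
      rw [show -α + 1 = 1 - α from by ring, show α - 1 + 1 = α from by ring]
  _ = ENNReal.ofReal (1 / α) + ENNReal.ofReal (1 / (1 - α)) := by
      rw [← ENNReal.ofReal_mul (by positivity), ← ENNReal.ofReal_mul (Real.rpow_nonneg hv2.le _)]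
      congr 2
      · rw [Real.rpow_neg hv2.le]
        field_simp
      · have h2 : v - v / 2 = v / 2 := by ring
        rw [h2, div_eq_mul_one_div ((v/2) ^ (1-α)) (1 - α), ← mul_assoc, ← Real.rpow_add hv2]
        norm_num
  _ = ENNReal.ofReal (1 / α + 1 / (1 - α)) := by
      have h1α : 0 < 1 - α := by linarith
      rw [← ENNReal.ofReal_add (by positivity) (by positivity)]

lemma intOn_rpow_sub {a v q : ℝ} (hav : a ≤ v) (hq : -1 < q) :
    IntegrableOn (fun s : ℝ => (v - s) ^ q) (Ioc a v) := by
  have h0 : IntervalIntegrable (fun x : ℝ => x ^ q) volume (v - v) (v - a) :=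
    intervalIntegral.intervalIntegrable_rpow' hq
  have h1 := (h0.comp_sub_left v).symm
  simp only [sub_sub_cancel, sub_self, sub_zero] at h1
  exact (intervalIntegrable_iff_integrableOn_Ioc_of_le hav).1 h1

lemma intOn_rpow {w p : ℝ} (hw : 0 ≤ w) (hp : -1 < p) :
    IntegrableOn (fun s : ℝ => s ^ p) (Ioc 0 w) :=
  (intervalIntegrable_iff_integrableOn_Ioc_of_le hw).1
    (intervalIntegral.intervalIntegrable_rpow' hp)

lemma int_rpow_mul {p q t : ℝ} (hp : -1 < p) (hq : -1 < q) (ht : 0 < t) :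
    IntegrableOn (fun x : ℝ => x ^ p * (t - x) ^ q) (Ioc 0 t) := by
  have hmeas : AEStronglyMeasurable (fun x : ℝ => x ^ p * (t - x) ^ q) volume :=
    ((measurable_id.pow_const p).mul
      ((measurable_const.sub measurable_id).pow_const q)).aestronglyMeasurable
  have h1 : IntegrableOn (fun x : ℝ => x ^ p * (t - x) ^ q) (Ioc 0 (t / 2)) := by
    apply Integrable.mono' (IntegrableOn.mono_set
      ((intOn_rpow (by linarith) hp).const_mul ((t / 2) ^ q + t ^ q))
      (Ioc_subset_Ioc_right (by linarith)))
    · exact hmeas.restrict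
    · refine (ae_restrict_iff' measurableSet_Ioc).2 (ae_of_all _ fun x hx => ?_)
      have hx0 : 0 < x := hx.1
      have htx : t / 2 ≤ t - x := by linarith [hx.2]
      have htx2 : t - x ≤ t := by linarith
      have hb : (t - x) ^ q ≤ (t / 2) ^ q + t ^ q := by
        rcases le_or_gt 0 q with h | h
        · have := Real.rpow_le_rpow (by linarith : (0:ℝ) ≤ t - x) htx2 h
          have h2 : 0 ≤ (t / 2) ^ q := Real.rpow_nonneg (by linarith) q
          linarith
        · have := Real.rpow_le_rpow_of_nonpos (by linarith : (0:ℝ) < t / 2) htx h.le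
          have h2 : 0 ≤ t ^ q := Real.rpow_nonneg ht.le q
          linarith
      rw [Real.norm_eq_abs, abs_of_nonneg (mul_nonneg (Real.rpow_nonneg hx0.le p)
        (Real.rpow_nonneg (by linarith) q))]
      calc x ^ p * (t - x) ^ q ≤ x ^ p * ((t / 2) ^ q + t ^ q) :=
            mul_le_mul_of_nonneg_left hb (Real.rpow_nonneg hx0.le p)
      _ = ((t / 2) ^ q + t ^ q) * x ^ p := by ring
  have h2 : IntegrableOn (fun x : ℝ => x ^ p * (t - x) ^ q) (Ioc (t / 2) t) := by
    apply Integrable.mono' ((intOn_rpow_sub (by linarith : t / 2 ≤ t) hq).const_mul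
      ((t / 2) ^ p + t ^ p))
    · exact hmeas.restrict
    · refine (ae_restrict_iff' measurableSet_Ioc).2 (ae_of_all _ fun x hx => ?_)
      have hx0 : 0 < x := lt_trans (by linarith) hx.1
      have hb : x ^ p ≤ (t / 2) ^ p + t ^ p := by
        rcases le_or_gt 0 p with h | h
        · have := Real.rpow_le_rpow hx0.le hx.2 h
          have h2 : 0 ≤ (t / 2) ^ p := Real.rpow_nonneg (by linarith) p
          linarith
        · have := Real.rpow_le_rpow_of_nonpos (by linarith : (0:ℝ) < t / 2) hx.1.le h.le
          have h2 : 0 ≤ t ^ p := Real.rpow_nonneg ht.le p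
          linarith
      rw [Real.norm_eq_abs, abs_of_nonneg (mul_nonneg (Real.rpow_nonneg hx0.le p)
        (Real.rpow_nonneg (by linarith [hx.2]) q))]
      calc x ^ p * (t - x) ^ q ≤ ((t / 2) ^ p + t ^ p) * (t - x) ^ q :=
            mul_le_mul_of_nonneg_right hb (Real.rpow_nonneg (by linarith [hx.2]) q)
      _ = ((t / 2) ^ p + t ^ p) * (t - x) ^ q := rfl
  have hsub : Ioc 0 t ⊆ Ioc 0 (t / 2) ∪ Ioc (t / 2) t := by
    rw [Ioc_union_Ioc_eq_Ioc (by linarith) (by linarith)]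
  exact (h1.union h2).mono_set hsub

lemma swap1 {α u cν : ℝ} (hα0 : 0 < α) (hcν : 0 < cν) (hu : 0 < u)
    (g : ℝ → ℝ≥0∞) (hg : Measurable g) :
    (∫⁻ y in Ioi 0, ENNReal.ofReal (cν * y ^ (-(1 + α))) * ∫⁻ r in Ioc (max (u - y) 0) u, g r)
      ≤ ENNReal.ofReal (cν / α) * ∫⁻ r in Ioc 0 u, g r * ENNReal.ofReal ((u - r) ^ (-α)) := by
  set S : Set (ℝ × ℝ) := {p | 0 < p.1 ∧ max (u - p.1) 0 < p.2 ∧ p.2 ≤ u} with hS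
  have hSmeas : MeasurableSet S := by
    apply MeasurableSet.inter (measurableSet_lt measurable_const measurable_fst)
    exact MeasurableSet.inter
      (measurableSet_lt ((measurable_const.sub measurable_fst).max measurable_const) measurable_snd)
      (measurableSet_le measurable_snd measurable_const)
  set F : ℝ × ℝ → ℝ≥0∞ :=
    S.indicator (fun p => ENNReal.ofReal (cν * p.1 ^ (-(1 + α))) * g p.2) with hF
  have hFmeas : Measurable F := by
    apply Measurable.indicator _ hSmeas
    exact (((measurable_fst.pow_const (-(1 + α))).const_mul cν).ennreal_ofReal).mul
      (hg.comp measurable_snd)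
  have step1 : (∫⁻ y in Ioi 0,
      ENNReal.ofReal (cν * y ^ (-(1 + α))) * ∫⁻ r in Ioc (max (u - y) 0) u, g r)
      = ∫⁻ y, ∫⁻ r, F (y, r) := by
    rw [← lintegral_indicator measurableSet_Ioi]
    apply lintegral_congr; intro y
    by_cases hy : 0 < y
    · rw [indicator_of_mem (mem_Ioi.2 hy), ← lintegral_const_mul' _ _ ENNReal.ofReal_ne_top,
        ← lintegral_indicator measurableSet_Ioc]
      apply lintegral_congr; intro r
      by_cases hr : r ∈ Ioc (max (u - y) 0) u
      · rw [indicator_of_mem hr, hF, indicator_of_mem (show (y, r) ∈ S from ⟨hy, hr.1, hr.2⟩)]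
      · rw [indicator_of_notMem hr, hF, indicator_of_notMem
          (show (y, r) ∉ S from fun hc => hr ⟨hc.2.1, hc.2.2⟩)]
    · rw [indicator_of_notMem (by simpa using hy)]
      symm
      have hzero : ∀ r, F (y, r) = 0 := fun r => by
        rw [hF]; exact indicator_of_notMem (fun hc => hy hc.1) _
      simp [hzero]
  have step2 : (∫⁻ y, ∫⁻ r, F (y, r)) = ∫⁻ r, ∫⁻ y, F (y, r) :=
    lintegral_lintegral_swap hFmeas.aemeasurable
  have step3 : (∫⁻ r, ∫⁻ y, F (y, r)) ≤
      ∫⁻ r, (Ioc 0 u).indicator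
        (fun r => ENNReal.ofReal (cν / α) * (g r * ENNReal.ofReal ((u - r) ^ (-α)))) r := by
    have hne : ∀ᵐ r : ℝ, r ≠ u := by
      refine ae_iff.2 ?_
      simp only [ne_eq, not_not, setOf_eq_eq_singleton]
      exact Real.volume_singleton
    apply lintegral_mono_ae
    filter_upwards [hne] with r hru
    by_cases hr : r ∈ Ioc 0 u
    · have hrlt : r < u := lt_of_le_of_ne hr.2 hru
      have hur : 0 < u - r := by linarith
      have hsec : ∀ y, F (y, r) =
          (Ioi (u - r)).indicator (fun y => ENNReal.ofReal (cν * y ^ (-(1 + α)))) y * g r := by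
        intro y
        by_cases hy : y ∈ Ioi (u - r)
        · rw [hF, indicator_of_mem (show (y, r) ∈ S from
              ⟨lt_trans hur hy, max_lt (by simpa [mem_Ioi, sub_lt_comm] using hy) hr.1, hr.2⟩),
            indicator_of_mem hy]
        · rw [indicator_of_notMem hy, zero_mul, hF, indicator_of_notMem]
          intro hc
          exact hy (mem_Ioi.2 (by
            have := lt_of_le_of_lt (le_max_left (u - y) 0) hc.2.1
            linarith))
      calc (∫⁻ y, F (y, r))
          = (∫⁻ y, (Ioi (u - r)).indicator (fun y => ENNReal.ofReal (cν * y ^ (-(1 + α)))) y) * g r := by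
            simp_rw [hsec]
            exact lintegral_mul_const _ ((((measurable_id.pow_const (-(1 + α))).const_mul cν).ennreal_ofReal).indicator measurableSet_Ioi)
      _ = (∫⁻ y in Ioi (u - r), ENNReal.ofReal (cν * y ^ (-(1 + α)))) * g r := by
            rw [lintegral_indicator measurableSet_Ioi]
      _ = (ENNReal.ofReal cν * ∫⁻ y in Ioi (u - r), ENNReal.ofReal (y ^ (-(1 + α)))) * g r := by
            simp_rw [ENNReal.ofReal_mul hcν.le]
            rw [lintegral_const_mul' _ _ ENNReal.ofReal_ne_top]
      _ = (ENNReal.ofReal cν * ENNReal.ofReal (-(u - r) ^ (-(1 + α) + 1) / (-(1 + α) + 1))) * g r := by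
            rw [lint_Ioi_rpow hur (by linarith : -(1 + α) < -1)]
      _ = ENNReal.ofReal (cν / α) * (g r * ENNReal.ofReal ((u - r) ^ (-α))) := by
            rw [show -(1 + α) + 1 = -α from by ring,
              show -(u - r) ^ (-α) / (-α) = (u - r) ^ (-α) / α from by ring,
              ← ENNReal.ofReal_mul hcν.le,
              show cν * ((u - r) ^ (-α) / α) = cν / α * (u - r) ^ (-α) from by ring,
              ENNReal.ofReal_mul (div_nonneg hcν.le hα0.le)]
            ring
      _ ≤ (Ioc 0 u).indicator
            (fun r => ENNReal.ofReal (cν / α) * (g r * ENNReal.ofReal ((u - r) ^ (-α)))) r := by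
            rw [indicator_of_mem hr]
    · have hzero : ∀ y, F (y, r) = 0 := by
        intro y
        rw [hF]
        apply indicator_of_notMem
        intro hc
        exact hr ⟨lt_of_le_of_lt (le_max_right (u - y) 0) hc.2.1, hc.2.2⟩
      simp [hzero, indicator_of_notMem hr]
  calc (∫⁻ y in Ioi 0, ENNReal.ofReal (cν * y ^ (-(1 + α))) * ∫⁻ r in Ioc (max (u - y) 0) u, g r)
      ≤ ∫⁻ r, (Ioc 0 u).indicator
        (fun r => ENNReal.ofReal (cν / α) * (g r * ENNReal.ofReal ((u - r) ^ (-α)))) r := by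
        rw [step1, step2]; exact step3
  _ = ENNReal.ofReal (cν / α) * ∫⁻ r in Ioc 0 u, g r * ENNReal.ofReal ((u - r) ^ (-α)) := by
        rw [lintegral_indicator measurableSet_Ioc,
          lintegral_const_mul' _ _ ENNReal.ofReal_ne_top]

lemma swap2 {α u : ℝ} (hα0 : 0 < α) (hα2 : α < 1) (hu : 0 < u)
    (g : ℝ → ℝ≥0∞) (hg : Measurable g) :
    (∫⁻ s in Ioc 0 u, ENNReal.ofReal (s ^ (α - 1)) *
        ∫⁻ r in Ioc 0 (u - s), g r * ENNReal.ofReal ((u - s - r) ^ (-α)))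
      ≤ ENNReal.ofReal (1 / α + 1 / (1 - α)) * ∫⁻ r in Ioc 0 u, g r := by
  set S : Set (ℝ × ℝ) := {p | 0 < p.1 ∧ 0 < p.2 ∧ p.1 + p.2 ≤ u} with hS
  have hSmeas : MeasurableSet S := by
    apply MeasurableSet.inter (measurableSet_lt measurable_const measurable_fst)
    exact MeasurableSet.inter (measurableSet_lt measurable_const measurable_snd)
      (measurableSet_le (measurable_fst.add measurable_snd) measurable_const)
  set F : ℝ × ℝ → ℝ≥0∞ :=
    S.indicator (fun p => ENNReal.ofReal (p.1 ^ (α - 1)) *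
      (g p.2 * ENNReal.ofReal ((u - p.1 - p.2) ^ (-α)))) with hF
  have hFmeas : Measurable F := by
    apply Measurable.indicator _ hSmeas
    exact ((measurable_fst.pow_const (α - 1)).ennreal_ofReal).mul
      ((hg.comp measurable_snd).mul
        (((measurable_const.sub measurable_fst).sub measurable_snd).pow_const (-α)).ennreal_ofReal)
  have step1 : (∫⁻ s in Ioc 0 u, ENNReal.ofReal (s ^ (α - 1)) *
        ∫⁻ r in Ioc 0 (u - s), g r * ENNReal.ofReal ((u - s - r) ^ (-α)))
      = ∫⁻ s, ∫⁻ r, F (s, r) := by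
    rw [← lintegral_indicator measurableSet_Ioc]
    apply lintegral_congr; intro s
    by_cases hs : s ∈ Ioc 0 u
    · rw [indicator_of_mem hs, ← lintegral_const_mul' _ _ ENNReal.ofReal_ne_top,
        ← lintegral_indicator measurableSet_Ioc]
      apply lintegral_congr; intro r
      by_cases hr : r ∈ Ioc 0 (u - s)
      · rw [indicator_of_mem hr, hF, indicator_of_mem
          (show (s, r) ∈ S from ⟨hs.1, hr.1, by linarith [hr.2]⟩)]
      · rw [indicator_of_notMem hr, hF, indicator_of_notMem
          (show (s, r) ∉ S from fun hc => hr ⟨hc.2.1, by linarith [hc.2.2]⟩)]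
    · rw [indicator_of_notMem hs]
      symm
      have hzero : ∀ r, F (s, r) = 0 := fun r => by
        rw [hF]
        apply indicator_of_notMem
        intro hc
        exact hs ⟨hc.1, by linarith [hc.2.1, hc.2.2]⟩
      simp [hzero]
  have step2 : (∫⁻ s, ∫⁻ r, F (s, r)) = ∫⁻ r, ∫⁻ s, F (s, r) :=
    lintegral_lintegral_swap hFmeas.aemeasurable
  have step3 : (∫⁻ r, ∫⁻ s, F (s, r)) ≤
      ∫⁻ r, (Ioc 0 u).indicator
        (fun r => ENNReal.ofReal (1 / α + 1 / (1 - α)) * g r) r := by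
    apply lintegral_mono
    intro r
    by_cases hr : r ∈ Ioc 0 u
    · have hsec : ∀ s, F (s, r) =
          (Ioc 0 (u - r)).indicator
            (fun s => ENNReal.ofReal (s ^ (α - 1)) * ENNReal.ofReal ((u - r - s) ^ (-α))) s * g r := by
        intro s
        by_cases hsmem : s ∈ Ioc 0 (u - r)
        · rw [hF, indicator_of_mem (show (s, r) ∈ S from ⟨hsmem.1, hr.1, by linarith [hsmem.2]⟩),
            indicator_of_mem hsmem, show u - s - r = u - r - s from by ring]
          ring
        · rw [indicator_of_notMem hsmem, zero_mul, hF, indicator_of_notMem]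
          intro hc
          exact hsmem ⟨hc.1, by linarith [hc.2.2]⟩
      calc (∫⁻ s, F (s, r))
          = (∫⁻ s, (Ioc 0 (u - r)).indicator
              (fun s => ENNReal.ofReal (s ^ (α - 1)) * ENNReal.ofReal ((u - r - s) ^ (-α))) s) * g r := by
            simp_rw [hsec]
            exact lintegral_mul_const _
              (((measurable_id.pow_const (α - 1)).ennreal_ofReal.mul
                ((measurable_const.sub measurable_id).pow_const (-α)).ennreal_ofReal).indicator
                measurableSet_Ioc)
      _ = (∫⁻ s in Ioc 0 (u - r), ENNReal.ofReal (s ^ (α - 1)) * ENNReal.ofReal ((u - r - s) ^ (-α))) * g r := by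
            rw [lintegral_indicator measurableSet_Ioc]
      _ ≤ ENNReal.ofReal (1 / α + 1 / (1 - α)) * g r := by
            rcases lt_or_ge r u with hru | hru
            · exact mul_le_mul_left (beta_bound hα0 hα2 (by linarith)) _
            · have : u - r ≤ 0 := by linarith
              rw [Ioc_eq_empty (by simpa using this)]
              simp
      _ = (Ioc 0 u).indicator (fun r => ENNReal.ofReal (1 / α + 1 / (1 - α)) * g r) r := by
            rw [indicator_of_mem hr]
    · have hzero : ∀ s, F (s, r) = 0 := fun s => by
        rw [hF]
        apply indicator_of_notMem
        intro hc
        exact hr ⟨hc.2.1, by linarith [hc.1, hc.2.2]⟩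
      simp [hzero, indicator_of_notMem hr]
  calc (∫⁻ s in Ioc 0 u, ENNReal.ofReal (s ^ (α - 1)) *
        ∫⁻ r in Ioc 0 (u - s), g r * ENNReal.ofReal ((u - s - r) ^ (-α)))
      ≤ ∫⁻ r, (Ioc 0 u).indicator
        (fun r => ENNReal.ofReal (1 / α + 1 / (1 - α)) * g r) r := by
        rw [step1, step2]; exact step3
  _ = ENNReal.ofReal (1 / α + 1 / (1 - α)) * ∫⁻ r in Ioc 0 u, g r := by
        rw [lintegral_indicator measurableSet_Ioc,
          lintegral_const_mul' _ _ ENNReal.ofReal_ne_top]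

lemma vop_lint_bound {α ζ b cν T u : ℝ} (hα0 : 0 < α) (hζ : 0 < ζ) (hb : 0 < b)
    (hcν : 0 < cν) (hu : 0 < u) (huT : u ≤ T)
    {f ft : ℝ → ℝ} (hf : IntegrableOn f (Set.Ioc 0 T)) (hft : Measurable ft)
    (hae : f =ᵐ[volume.restrict (Set.Ioc 0 T)] ft) :
    ENNReal.ofReal (Vop α ζ b cν f u) ≤
      ENNReal.ofReal (Real.exp ((ζ / b) * ∫ x in Set.Ioc 0 T, |f x|) * (ζ / b) ^ 2 * (cν / α)) *
        ∫⁻ r in Set.Ioc 0 u, ENNReal.ofReal (ft r ^ 2) * ENNReal.ofReal ((u - r) ^ (-α)) := by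
  have hba : 0 < ζ / b := div_pos hζ hb
  set A : ℝ := (ζ / b) * ∫ x in Set.Ioc 0 T, |f x| with hA
  have hA0 : 0 ≤ A := mul_nonneg hba.le (integral_nonneg fun x => abs_nonneg _)
  set g : ℝ → ℝ≥0∞ := fun r => ENNReal.ofReal (ft r ^ 2) with hg
  have hgmeas : Measurable g := (hft.pow_const 2).ennreal_ofReal
  set w : ℝ → ℝ := fun y => (Real.exp (-((ζ / b) * ∫ s in (max (u - y) 0)..u, f s)) - 1
      + (ζ / b) * ∫ s in (max (u - y) 0)..u, f s) * (cν * y ^ (-(2 + α))) with hwdef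
  have hVop : Vop α ζ b cν f u = ∫ y in Ioi (0:ℝ), w y := rfl
  by_cases hInt : IntegrableOn w (Ioi 0) volume
  swap
  · rw [hVop, integral_undef hInt]
    simp
  have hwnn : ∀ y ∈ Ioi (0:ℝ), 0 ≤ w y := fun y hy =>
    mul_nonneg (aux_nonneg _) (mul_nonneg hcν.le (Real.rpow_nonneg (le_of_lt hy) _))
  have h1 : ENNReal.ofReal (Vop α ζ b cν f u) = ∫⁻ y in Ioi 0, ENNReal.ofReal (w y) := by
    rw [hVop, ofReal_integral_eq_lintegral_ofReal hInt
      ((ae_restrict_iff' measurableSet_Ioi).2 (ae_of_all _ hwnn))]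
  have key : ∀ y ∈ Ioi (0:ℝ), ENNReal.ofReal (w y) ≤
      ENNReal.ofReal (Real.exp A * (ζ / b) ^ 2) *
        (ENNReal.ofReal (cν * y ^ (-(1 + α))) * ∫⁻ r in Ioc (max (u - y) 0) u, g r) := by
    intro y hy
    rw [mem_Ioi] at hy
    set a : ℝ := max (u - y) 0 with ha
    have ha0 : 0 ≤ a := le_max_right _ _
    have hau : a ≤ u := max_le (by linarith) hu.le
    have hay : u - a ≤ y := by
      rcases le_total (u - y) 0 with h | h
      · rw [ha, max_eq_right h]; linarith
      · rw [ha, max_eq_left h]; linarith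
    have hsub : Ioc a u ⊆ Ioc 0 T := fun s hs => ⟨lt_of_le_of_lt ha0 hs.1, le_trans hs.2 huT⟩
    have habs : IntegrableOn (fun x => |f x|) (Ioc 0 T) := hf.abs
    set xi : ℝ := ∫ s in a..u, f s with hxi
    have hxi1 : |xi| ≤ ∫ r in Ioc a u, |f r| := by
      rw [hxi, intervalIntegral.integral_of_le hau]
      calc |∫ s in Ioc a u, f s| = ‖∫ s in Ioc a u, f s‖ := (Real.norm_eq_abs _).symm
      _ ≤ ∫ s in Ioc a u, ‖f s‖ := norm_integral_le_integral_norm _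
      _ = ∫ r in Ioc a u, |f r| := by simp [Real.norm_eq_abs]
    have hxi2 : ∫ r in Ioc a u, |f r| ≤ ∫ r in Ioc 0 T, |f r| :=
      setIntegral_mono_set habs (ae_of_all _ fun x => abs_nonneg _)
        (HasSubset.Subset.eventuallyLE hsub)
    have hxiA : |(ζ / b) * xi| ≤ A := by
      rw [abs_mul, abs_of_pos hba, hA]
      exact mul_le_mul_of_nonneg_left (le_trans hxi1 hxi2) hba.le
    have hw1 : w y ≤ ((ζ / b) * xi) ^ 2 * Real.exp A * (cν * y ^ (-(2 + α))) :=
      mul_le_mul_of_nonneg_right (aux_quad hxiA)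
        (mul_nonneg hcν.le (Real.rpow_nonneg hy.le _))
    have hsplit : ((ζ / b) * xi) ^ 2 * Real.exp A * (cν * y ^ (-(2 + α)))
        = (Real.exp A * (ζ / b) ^ 2) * (xi ^ 2 * (y * (cν * y ^ (-(2 + α))))) / y := by
      field_simp
    have hy2 : y * (cν * y ^ (-(2 + α))) = cν * y ^ (-(1 + α)) := by
      rw [show (-(1 + α)) = (-(2 + α)) + 1 from by ring, Real.rpow_add_one (ne_of_gt hy)]
      ring
    -- bound ofReal (xi^2) by CS
    have hIf : IntegrableOn (fun x => |f x|) (Ioc a u) := habs.mono_set hsub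
    have hnn : 0 ≤ᵐ[volume.restrict (Ioc a u)] fun x => |f x| := ae_of_all _ fun x => abs_nonneg _
    have heq1 : ENNReal.ofReal (∫ r in Ioc a u, |f r|) = ∫⁻ r in Ioc a u, ENNReal.ofReal |f r| :=
      ofReal_integral_eq_lintegral_ofReal hIf hnn
    have heq2 : (∫⁻ r in Ioc a u, ENNReal.ofReal |f r|) = ∫⁻ r in Ioc a u, ENNReal.ofReal |ft r| := by
      apply lintegral_congr_ae
      filter_upwards [ae_restrict_of_ae_restrict_of_subset hsub hae] with r hr
      rw [hr]
    have hCS : (∫⁻ r in Ioc a u, ENNReal.ofReal |ft r|) ^ 2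
        ≤ volume (Ioc a u) * ∫⁻ r in Ioc a u, g r := by
      calc (∫⁻ r in Ioc a u, ENNReal.ofReal |ft r|) ^ 2
          ≤ volume (Ioc a u) * ∫⁻ r in Ioc a u, (ENNReal.ofReal |ft r|) ^ 2 :=
            lint_CS _ (hft.abs.ennreal_ofReal.aemeasurable)
      _ = volume (Ioc a u) * ∫⁻ r in Ioc a u, g r := by
          congr 1
          apply lintegral_congr
          intro r
          rw [hg, ← ENNReal.ofReal_pow (abs_nonneg _), sq_abs]
    have hx2 : ENNReal.ofReal (xi ^ 2) ≤ ENNReal.ofReal y * ∫⁻ r in Ioc a u, g r := by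
      calc ENNReal.ofReal (xi ^ 2) = (ENNReal.ofReal |xi|) ^ 2 := by
            rw [← sq_abs xi, ENNReal.ofReal_pow (abs_nonneg _)]
      _ ≤ (ENNReal.ofReal (∫ r in Ioc a u, |f r|)) ^ 2 :=
            pow_le_pow_left' (ENNReal.ofReal_le_ofReal hxi1) 2
      _ = (∫⁻ r in Ioc a u, ENNReal.ofReal |ft r|) ^ 2 := by rw [heq1, heq2]
      _ ≤ volume (Ioc a u) * ∫⁻ r in Ioc a u, g r := hCS
      _ = ENNReal.ofReal (u - a) * ∫⁻ r in Ioc a u, g r := by rw [Real.volume_Ioc]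
      _ ≤ ENNReal.ofReal y * ∫⁻ r in Ioc a u, g r :=
            mul_le_mul_left (ENNReal.ofReal_le_ofReal hay) _
    calc ENNReal.ofReal (w y)
        ≤ ENNReal.ofReal (((ζ / b) * xi) ^ 2 * Real.exp A * (cν * y ^ (-(2 + α)))) :=
          ENNReal.ofReal_le_ofReal hw1
    _ = ENNReal.ofReal (Real.exp A * (ζ / b) ^ 2) * ENNReal.ofReal (xi ^ 2) *
          ENNReal.ofReal (cν * y ^ (-(2 + α))) := by
        rw [show ((ζ / b) * xi) ^ 2 * Real.exp A * (cν * y ^ (-(2 + α)))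
            = (Real.exp A * (ζ / b) ^ 2) * (xi ^ 2) * (cν * y ^ (-(2 + α))) from by ring,
          ENNReal.ofReal_mul (by positivity), ENNReal.ofReal_mul (by positivity)]
    _ ≤ ENNReal.ofReal (Real.exp A * (ζ / b) ^ 2) * (ENNReal.ofReal y * ∫⁻ r in Ioc a u, g r) *
          ENNReal.ofReal (cν * y ^ (-(2 + α))) :=
        mul_le_mul_left (mul_le_mul_right hx2 _) _
    _ = ENNReal.ofReal (Real.exp A * (ζ / b) ^ 2) *
          ((ENNReal.ofReal y * ENNReal.ofReal (cν * y ^ (-(2 + α)))) * ∫⁻ r in Ioc a u, g r) := by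
        ring
    _ = ENNReal.ofReal (Real.exp A * (ζ / b) ^ 2) *
          (ENNReal.ofReal (cν * y ^ (-(1 + α))) * ∫⁻ r in Ioc a u, g r) := by
        rw [← ENNReal.ofReal_mul hy.le, hy2]
  rw [h1]
  calc ∫⁻ y in Ioi 0, ENNReal.ofReal (w y)
      ≤ ∫⁻ y in Ioi 0, ENNReal.ofReal (Real.exp A * (ζ / b) ^ 2) *
          (ENNReal.ofReal (cν * y ^ (-(1 + α))) * ∫⁻ r in Ioc (max (u - y) 0) u, g r) :=
        setLIntegral_mono' measurableSet_Ioi key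
  _ = ENNReal.ofReal (Real.exp A * (ζ / b) ^ 2) * ∫⁻ y in Ioi 0,
        ENNReal.ofReal (cν * y ^ (-(1 + α))) * ∫⁻ r in Ioc (max (u - y) 0) u, g r :=
        lintegral_const_mul' _ _ ENNReal.ofReal_ne_top
  _ ≤ ENNReal.ofReal (Real.exp A * (ζ / b) ^ 2) * (ENNReal.ofReal (cν / α) *
        ∫⁻ r in Ioc 0 u, g r * ENNReal.ofReal ((u - r) ^ (-α))) :=
        mul_le_mul_right (swap1 hα0 hcν hu g hgmeas) _
  _ = ENNReal.ofReal (Real.exp A * (ζ / b) ^ 2 * (cν / α)) *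
        ∫⁻ r in Ioc 0 u, g r * ENNReal.ofReal ((u - r) ^ (-α)) := by
        conv_rhs => rw [ENNReal.ofReal_mul (by positivity)]
        rw [mul_assoc]

theorem stmt_4 (α γ ζ b cν T : ℝ) (hα : α ∈ Set.Ioo (1/2 : ℝ) 1)
    (hγ : 0 < γ) (hζ : 0 < ζ) (hb : 0 < b) (hcν : 0 < cν) (hT : 0 < T)
    (f : ℝ → ℝ) (hf : IntegrableOn f (Set.Ioc 0 T))
    (hreg : (∃ M, ∀ t ∈ Set.Ioc (0:ℝ) T, t ^ (1 - α) * |f t| ≤ M) ∨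
            (∃ M, ∀ t ∈ Set.Ioc (0:ℝ) T, |f t| ≤ M)) :
    (∀ t ∈ Set.Ioc (0:ℝ) T, 0 ≤ Vop α ζ b cν f t) ∧
    ∃ C > (0:ℝ), ∀ t ∈ Set.Ioc (0:ℝ) T,
      0 ≤ conv (Vop α ζ b cν f) (fracK α γ) t ∧
      conv (Vop α ζ b cν f) (fracK α γ) t ≤
        C * conv (fun s => |f s| ^ 2) (fracK α γ) t := by
  obtain ⟨hα1, hα2⟩ := hα
  have hα0 : 0 < α := by linarith
  have hΓ : 0 < Real.Gamma α := Real.Gamma_pos_of_pos hα0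
  have hba : 0 < ζ / b := div_pos hζ hb
  -- Vop is nonneg everywhere
  have part1 : ∀ u : ℝ, 0 ≤ Vop α ζ b cν f u := by
    intro u
    apply setIntegral_nonneg measurableSet_Ioi
    intro y hy
    exact mul_nonneg (aux_nonneg _) (mul_nonneg hcν.le (Real.rpow_nonneg (le_of_lt hy) _))
  have hK : ∀ s : ℝ, 0 ≤ s → 0 ≤ fracK α γ s := fun s hs =>
    div_nonneg (mul_nonneg hγ.le (Real.rpow_nonneg hs _)) hΓ.le
  -- measurable representative of f
  have hfm := hf.1
  set ft : ℝ → ℝ := hfm.mk f with hftdef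
  have hftmeas : Measurable ft := hfm.stronglyMeasurable_mk.measurable
  have haef : f =ᵐ[volume.restrict (Ioc 0 T)] ft := hfm.ae_eq_mk
  have hmeas2 : AEStronglyMeasurable (fun x => f x ^ 2) (volume.restrict (Ioc 0 T)) :=
    (hfm.mul hfm).congr (ae_of_all _ fun x => (pow_two (f x)).symm)
  -- unified pointwise domination of |f|^2
  obtain ⟨M, p, hp1, hp2, hMb⟩ : ∃ M : ℝ, ∃ p : ℝ, -1 < p ∧ p ≤ 0 ∧
      ∀ x ∈ Ioc (0:ℝ) T, |f x| ^ 2 ≤ M * x ^ p := by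
    rcases hreg with ⟨M, hM⟩ | ⟨M, hM⟩
    · refine ⟨M ^ 2, 2 * α - 2, by linarith, by linarith, fun x hx => ?_⟩
      have hx0 : 0 < x := hx.1
      have hpz : 0 < x ^ (1 - α) := Real.rpow_pos_of_pos hx0 _
      have hMf : |f x| ≤ M * x ^ (α - 1) := by
        rw [show α - 1 = -(1 - α) from by ring, Real.rpow_neg hx0.le, ← div_eq_mul_inv,
          le_div_iff₀ hpz]
        calc |f x| * x ^ (1 - α) = x ^ (1 - α) * |f x| := mul_comm _ _
        _ ≤ M := hM x hx
      calc |f x| ^ 2 ≤ (M * x ^ (α - 1)) ^ 2 := pow_le_pow_left₀ (abs_nonneg _) hMf 2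
      _ = M ^ 2 * (x ^ (α - 1) * x ^ (α - 1)) := by ring
      _ = M ^ 2 * x ^ (2 * α - 2) := by
          rw [← Real.rpow_add hx0, show α - 1 + (α - 1) = 2 * α - 2 from by ring]
    · refine ⟨M ^ 2, 0, by norm_num, le_refl 0, fun x hx => ?_⟩
      rw [Real.rpow_zero, mul_one]
      exact pow_le_pow_left₀ (abs_nonneg _) (hM x hx) 2
  -- integrability of f^2
  have hf2 : IntegrableOn (fun x => f x ^ 2) (Ioc 0 T) := by
    apply Integrable.mono' ((intOn_rpow hT.le hp1).const_mul M) hmeas2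
    refine (ae_restrict_iff' measurableSet_Ioc).2 (ae_of_all _ fun x hx => ?_)
    rw [Real.norm_eq_abs, abs_of_nonneg (sq_nonneg _), ← sq_abs]
    exact hMb x hx
  -- integrability of |f|^2 * K(t - ·)
  have hPint : ∀ t ∈ Ioc (0:ℝ) T,
      IntegrableOn (fun x => |f x| ^ 2 * fracK α γ (t - x)) (Ioc 0 t) := by
    intro t ht
    have hsubt : Ioc (0:ℝ) t ⊆ Ioc 0 T := Ioc_subset_Ioc_right ht.2
    have hKm : Measurable fun x : ℝ => fracK α γ (t - x) :=
      (((measurable_const.sub measurable_id).pow_const (α - 1)).const_mul γ).div_const _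
    have hm : AEStronglyMeasurable (fun x => |f x| ^ 2 * fracK α γ (t - x))
        (volume.restrict (Ioc 0 t)) := by
      apply AEStronglyMeasurable.mul _ hKm.aestronglyMeasurable
      exact ((hmeas2.mono_measure (Measure.restrict_mono hsubt le_rfl)).congr
        (ae_of_all _ fun x => (sq_abs (f x)).symm))
    apply Integrable.mono' ((int_rpow_mul hp1 (by linarith : (-1:ℝ) < α - 1) ht.1).const_mul
      (M * γ / Real.Gamma α)) hm
    refine (ae_restrict_iff' measurableSet_Ioc).2 (ae_of_all _ fun x hx => ?_)
    have hx0 : 0 < x := hx.1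
    have htx : 0 ≤ t - x := by linarith [hx.2]
    rw [Real.norm_eq_abs, abs_of_nonneg (mul_nonneg (sq_nonneg _) (hK _ htx))]
    calc |f x| ^ 2 * fracK α γ (t - x) ≤ (M * x ^ p) * fracK α γ (t - x) :=
          mul_le_mul_of_nonneg_right (hMb x (hsubt hx)) (hK _ htx)
    _ = M * γ / Real.Gamma α * (x ^ p * (t - x) ^ (α - 1)) := by
        rw [fracK]; ring
  -- constants
  set Bco : ℝ := 1 / α + 1 / (1 - α) with hBco
  have hBcopos : 0 < Bco := by
    have h1 : 0 < 1 - α := by linarith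
    positivity
  set E1 : ℝ := Real.exp ((ζ / b) * ∫ x in Ioc 0 T, |f x|) * (ζ / b) ^ 2 * (cν / α) with hE1
  have hE1pos : 0 < E1 := by positivity
  set CE : ℝ≥0∞ := ENNReal.ofReal E1 with hCE
  set Creal : ℝ := E1 * (γ / Real.Gamma α) * Bco with hCreal
  have hCrealpos : 0 < Creal := by positivity
  set c0 : ℝ := γ * T ^ (α - 1) / Real.Gamma α with hc0
  have hc0pos : 0 < c0 := by
    have := Real.rpow_pos_of_pos hT (α - 1)
    positivity
  have hne : ∀ t : ℝ, ∀ᵐ x : ℝ, x ≠ t := by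
    intro t
    refine ae_iff.2 ?_
    simp only [ne_eq, not_not, setOf_eq_eq_singleton]
    exact Real.volume_singleton
  -- identification of conv(|f|^2, K)
  have hconv2 : ∀ t ∈ Ioc (0:ℝ) T,
      conv (fun s => |f s| ^ 2) (fracK α γ) t = ∫ x in Ioc 0 t, |f x| ^ 2 * fracK α γ (t - x) := by
    intro t ht
    have h1 : conv (fun s => |f s| ^ 2) (fracK α γ) t
        = ∫ s in (0:ℝ)..t, (fun x => |f x| ^ 2 * fracK α γ (t - x)) (t - s) := by
      rw [conv]
      apply intervalIntegral.integral_congr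
      intro s _
      simp only
      rw [sub_sub_cancel]
    rw [h1, intervalIntegral.integral_comp_sub_left (fun x => |f x| ^ 2 * fracK α γ (t - x)) t,
      sub_self, sub_zero, intervalIntegral.integral_of_le ht.1.le]
  -- lower bound for conv(|f|^2, K)
  have hlow : ∀ t ∈ Ioc (0:ℝ) T,
      c0 * ∫ x in Ioc 0 t, f x ^ 2 ≤ conv (fun s => |f s| ^ 2) (fracK α γ) t := by
    intro t ht
    rw [hconv2 t ht]
    calc c0 * ∫ x in Ioc 0 t, f x ^ 2 = ∫ x in Ioc 0 t, c0 * f x ^ 2 :=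
          (integral_const_mul c0 _).symm
    _ ≤ ∫ x in Ioc 0 t, |f x| ^ 2 * fracK α γ (t - x) := by
        apply integral_mono_of_nonneg
        · exact ae_of_all _ fun x => mul_nonneg hc0pos.le (sq_nonneg _)
        · exact hPint t ht
        · refine (ae_restrict_iff' measurableSet_Ioc).2 ?_
          filter_upwards [hne t] with x hxt hx
          have hx0 : 0 < x := hx.1
          have hxlt : x < t := lt_of_le_of_ne hx.2 hxt
          have h2 : T ^ (α - 1) ≤ (t - x) ^ (α - 1) :=
            Real.rpow_le_rpow_of_nonpos (by linarith) (by linarith [ht.2]) (by linarith)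
          have h3 : c0 ≤ fracK α γ (t - x) := by
            rw [fracK, hc0]
            gcongr
          calc c0 * f x ^ 2 = f x ^ 2 * c0 := mul_comm _ _
          _ ≤ f x ^ 2 * fracK α γ (t - x) := mul_le_mul_of_nonneg_left h3 (sq_nonneg _)
          _ = |f x| ^ 2 * fracK α γ (t - x) := by rw [sq_abs]
  -- main upper bound
  have hgmeas : Measurable fun r => ENNReal.ofReal (ft r ^ 2) :=
    (hftmeas.pow_const 2).ennreal_ofReal
  have main : ∀ t ∈ Ioc (0:ℝ) T,
      conv (Vop α ζ b cν f) (fracK α γ) t ≤ Creal * ∫ x in Ioc 0 t, f x ^ 2 := by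
    intro t ht
    have hsubt : Ioc (0:ℝ) t ⊆ Ioc 0 T := Ioc_subset_Ioc_right ht.2
    have hintf2 : (0:ℝ) ≤ ∫ x in Ioc 0 t, f x ^ 2 := integral_nonneg fun x => sq_nonneg _
    by_cases hci : IntervalIntegrable (fun s => Vop α ζ b cν f (t - s) * fracK α γ s) volume 0 t
    swap
    · rw [conv, intervalIntegral.integral_undef hci]
      exact mul_nonneg hCrealpos.le hintf2
    have hIoc : IntegrableOn (fun s => Vop α ζ b cν f (t - s) * fracK α γ s) (Ioc 0 t) :=
      (intervalIntegrable_iff_integrableOn_Ioc_of_le ht.1.le).1 hci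
    have hnnae : 0 ≤ᵐ[volume.restrict (Ioc 0 t)]
        fun s => Vop α ζ b cν f (t - s) * fracK α γ s :=
      (ae_restrict_iff' measurableSet_Ioc).2
        (ae_of_all _ fun s hs => mul_nonneg (part1 _) (hK s hs.1.le))
    have heq : conv (Vop α ζ b cν f) (fracK α γ) t
        = (∫⁻ s in Ioc 0 t, ENNReal.ofReal (Vop α ζ b cν f (t - s) * fracK α γ s)).toReal := by
      rw [conv, intervalIntegral.integral_of_le ht.1.le,
        integral_eq_lintegral_of_nonneg_ae hnnae hIoc.1]
    have hg2 : (∫⁻ x in Ioc 0 t, ENNReal.ofReal (ft x ^ 2))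
        = ENNReal.ofReal (∫ x in Ioc 0 t, f x ^ 2) := by
      rw [ofReal_integral_eq_lintegral_ofReal (hf2.mono_set hsubt)
        (ae_of_all _ fun x => sq_nonneg _)]
      apply lintegral_congr_ae
      filter_upwards [ae_restrict_of_ae_restrict_of_subset hsubt haef] with x hx
      rw [hx]
    have hchain : (∫⁻ s in Ioc 0 t, ENNReal.ofReal (Vop α ζ b cν f (t - s) * fracK α γ s))
        ≤ ENNReal.ofReal Creal * ENNReal.ofReal (∫ x in Ioc 0 t, f x ^ 2) := by
      calc (∫⁻ s in Ioc 0 t, ENNReal.ofReal (Vop α ζ b cν f (t - s) * fracK α γ s))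
          ≤ ∫⁻ s in Ioc 0 t, (CE * ENNReal.ofReal (γ / Real.Gamma α)) *
              (ENNReal.ofReal (s ^ (α - 1)) *
                ∫⁻ r in Ioc 0 (t - s), ENNReal.ofReal (ft r ^ 2) *
                  ENNReal.ofReal ((t - s - r) ^ (-α))) := by
            apply setLIntegral_mono_ae' measurableSet_Ioc
            filter_upwards [hne t] with s hst hs
            have hu : 0 < t - s := by
              rcases lt_or_eq_of_le hs.2 with h | h
              · linarith
              · exact absurd h hst
            have hbd := vop_lint_bound hα0 hζ hb hcν hu (by linarith [ht.2, hs.1]) hf hftmeas haef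
            rw [ENNReal.ofReal_mul (part1 _)]
            have hKs : ENNReal.ofReal (fracK α γ s)
                = ENNReal.ofReal (γ / Real.Gamma α) * ENNReal.ofReal (s ^ (α - 1)) := by
              rw [← ENNReal.ofReal_mul (div_nonneg hγ.le hΓ.le)]
              congr 1
              rw [fracK]; ring
            calc ENNReal.ofReal (Vop α ζ b cν f (t - s)) * ENNReal.ofReal (fracK α γ s)
                ≤ (CE * ∫⁻ r in Ioc 0 (t - s), ENNReal.ofReal (ft r ^ 2) *
                    ENNReal.ofReal ((t - s - r) ^ (-α))) * ENNReal.ofReal (fracK α γ s) :=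
                  mul_le_mul_left hbd _
            _ = (CE * ENNReal.ofReal (γ / Real.Gamma α)) *
                  (ENNReal.ofReal (s ^ (α - 1)) *
                    ∫⁻ r in Ioc 0 (t - s), ENNReal.ofReal (ft r ^ 2) *
                      ENNReal.ofReal ((t - s - r) ^ (-α))) := by
                rw [hKs]; ring
      _ = (CE * ENNReal.ofReal (γ / Real.Gamma α)) *
            ∫⁻ s in Ioc 0 t, ENNReal.ofReal (s ^ (α - 1)) *
              ∫⁻ r in Ioc 0 (t - s), ENNReal.ofReal (ft r ^ 2) *
                ENNReal.ofReal ((t - s - r) ^ (-α)) :=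
            lintegral_const_mul' _ _ (ENNReal.mul_ne_top ENNReal.ofReal_ne_top ENNReal.ofReal_ne_top)
      _ ≤ (CE * ENNReal.ofReal (γ / Real.Gamma α)) *
            (ENNReal.ofReal (1 / α + 1 / (1 - α)) * ∫⁻ r in Ioc 0 t, ENNReal.ofReal (ft r ^ 2)) :=
            mul_le_mul_right (swap2 hα0 hα2 ht.1 _ hgmeas) _
      _ = ENNReal.ofReal Creal * ENNReal.ofReal (∫ x in Ioc 0 t, f x ^ 2) := by
            rw [hg2, hCE, hCreal,
              ENNReal.ofReal_mul (mul_nonneg hE1pos.le (div_nonneg hγ.le hΓ.le)),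
              ENNReal.ofReal_mul hE1pos.le, hBco]
            ring
    calc conv (Vop α ζ b cν f) (fracK α γ) t
        = (∫⁻ s in Ioc 0 t, ENNReal.ofReal (Vop α ζ b cν f (t - s) * fracK α γ s)).toReal := heq
    _ ≤ (ENNReal.ofReal Creal * ENNReal.ofReal (∫ x in Ioc 0 t, f x ^ 2)).toReal :=
        ENNReal.toReal_mono (ENNReal.mul_ne_top ENNReal.ofReal_ne_top ENNReal.ofReal_ne_top) hchain
    _ = Creal * ∫ x in Ioc 0 t, f x ^ 2 := by
        rw [← ENNReal.ofReal_mul hCrealpos.le, ENNReal.toReal_ofReal (by positivity)]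
  -- assemble
  refine ⟨fun t _ => part1 t, Creal / c0, div_pos hCrealpos hc0pos, fun t ht => ⟨?_, ?_⟩⟩
  · apply intervalIntegral.integral_nonneg ht.1.le
    intro s hs
    exact mul_nonneg (part1 _) (hK s hs.1)
  · calc conv (Vop α ζ b cν f) (fracK α γ) t ≤ Creal * ∫ x in Ioc 0 t, f x ^ 2 := main t ht
    _ = (Creal / c0) * (c0 * ∫ x in Ioc 0 t, f x ^ 2) := by
        rw [show Creal / c0 * (c0 * ∫ x in Ioc 0 t, f x ^ 2)
            = Creal * (∫ x in Ioc 0 t, f x ^ 2) * (c0 / c0) from by ring,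
          div_self hc0pos.ne', mul_one]
    _ ≤ (Creal / c0) * conv (fun s => |f s| ^ 2) (fracK α γ) t :=
        mul_le_mul_of_nonneg_left (hlow t ht) (div_nonneg hCrealpos.le hc0pos.le)
end

section
/- Let α ∈ (1/2,1) and let f : (0,∞) → ℝ be differentiable with |f(s)| ≤ C s^{α−1} and |f′(s)| ≤ C s^{α−2} for all s > 0 and some constant C > 0. Then there exists a constant C′ > 0, depending only on α and C, such that for every h > 0: (a) ∫_0^h |f(s)|² ds ≤ C′ h^{2α−1}; (b) |f(h+s) − f(s)| ≤ C′ · min( s^{α−1}, h · s^{α−2} ) for every s > 0; and (c) ∫_0^∞ |f(h+s) − f(s)|² ds ≤ C′ h^{2α−1}. -/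
open MeasureTheory Set

private lemma sq_rpow (x : ℝ) (hx : 0 ≤ x) (b : ℝ) : (x ^ b) ^ 2 = x ^ (2 * b) := by
  rw [← Real.rpow_natCast (x ^ b) 2, ← Real.rpow_mul hx]
  norm_num [mul_comm]

theorem stmt_14 (α C : ℝ) (hα : α ∈ Set.Ioo (1/2 : ℝ) 1) (hC : 0 < C)
    (f f' : ℝ → ℝ) (hderiv : ∀ s > (0:ℝ), HasDerivAt f (f' s) s)
    (hf : ∀ s > (0:ℝ), |f s| ≤ C * s ^ (α - 1))
    (hf' : ∀ s > (0:ℝ), |f' s| ≤ C * s ^ (α - 2)) :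
    ∃ C' > (0:ℝ),
      (∀ h > (0:ℝ), (∫ s in (0:ℝ)..h, |f s| ^ 2) ≤ C' * h ^ (2 * α - 1)) ∧
      (∀ h > (0:ℝ), ∀ s > (0:ℝ),
        |f (h + s) - f s| ≤ C' * min (s ^ (α - 1)) (h * s ^ (α - 2))) ∧
      (∀ h > (0:ℝ),
        (∫ s in Set.Ioi (0:ℝ), |f (h + s) - f s| ^ 2) ≤ C' * h ^ (2 * α - 1)) := by
  obtain ⟨hα1, hα2⟩ := hα
  have h2α1 : (0:ℝ) < 2 * α - 1 := by linarith
  have h3α : (0:ℝ) < 3 - 2 * α := by linarith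
  set K1 : ℝ := 1 / (2 * α - 1) with hK1def
  set K2 : ℝ := 1 / (3 - 2 * α) with hK2def
  have hK1 : 0 < K1 := by positivity
  have hK2 : 0 < K2 := by positivity
  have hcontf : ContinuousOn f (Ioi 0) := fun x hx =>
    ((hderiv x hx).continuousAt).continuousWithinAt
  -- the key pointwise bound
  have keyb : ∀ h > (0:ℝ), ∀ s > (0:ℝ),
      |f (h + s) - f s| ≤ (2 * C) * min (s ^ (α - 1)) (h * s ^ (α - 2)) := by
    intro h hh s hs
    have hhs : 0 < h + s := by linarith
    have hb1 : |f (h + s) - f s| ≤ (2 * C) * s ^ (α - 1) := by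
      have h1 : |f (h + s)| ≤ C * (h + s) ^ (α - 1) := hf _ hhs
      have h2 : (h + s) ^ (α - 1) ≤ s ^ (α - 1) :=
        Real.rpow_le_rpow_of_nonpos hs (by linarith) (by linarith)
      have h3 : |f s| ≤ C * s ^ (α - 1) := hf s hs
      calc |f (h + s) - f s| ≤ |f (h + s)| + |f s| := abs_sub _ _
        _ ≤ C * s ^ (α - 1) + C * s ^ (α - 1) := by
            refine add_le_add (h1.trans ?_) h3
            exact mul_le_mul_of_nonneg_left h2 hC.le
        _ = (2 * C) * s ^ (α - 1) := by ring
    have hb2 : |f (h + s) - f s| ≤ (2 * C) * (h * s ^ (α - 2)) := by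
      have hlt : s < s + h := by linarith
      have hcont : ContinuousOn f (Icc s (s + h)) := fun x hx =>
        ((hderiv x (lt_of_lt_of_le hs hx.1)).continuousAt).continuousWithinAt
      obtain ⟨c, hc, hceq⟩ := exists_hasDerivAt_eq_slope f f' hlt hcont
        (fun x hx => hderiv x (lt_trans hs hx.1))
      have hcpos : 0 < c := lt_trans hs hc.1
      have heq : f (h + s) - f s = f' c * h := by
        have : f' c * (s + h - s) = f (s + h) - f s := by
          rw [hceq, div_mul_cancel₀ _ (by linarith : s + h - s ≠ 0)]
        rw [add_comm h s, ← this]; ring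
      rw [heq, abs_mul, abs_of_pos hh]
      have h4 : |f' c| ≤ C * c ^ (α - 2) := hf' c hcpos
      have h5 : c ^ (α - 2) ≤ s ^ (α - 2) :=
        Real.rpow_le_rpow_of_nonpos hs hc.1.le (by linarith)
      calc |f' c| * h ≤ (C * s ^ (α - 2)) * h := by
            refine mul_le_mul_of_nonneg_right (h4.trans ?_) hh.le
            exact mul_le_mul_of_nonneg_left h5 hC.le
        _ ≤ (2 * C) * (h * s ^ (α - 2)) := by
            have : 0 ≤ s ^ (α - 2) := Real.rpow_nonneg hs.le _
            nlinarith [mul_nonneg (mul_nonneg hC.le hh.le) this]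
    rcases min_cases (s ^ (α - 1)) (h * s ^ (α - 2)) with ⟨he, _⟩ | ⟨he, _⟩ <;>
      rw [he] <;> [exact hb1; exact hb2]
  refine ⟨(2 * C + 1) ^ 2 * (K1 + K2 + 1), by positivity, ?_, ?_, ?_⟩
  · -- part (a)
    intro h hh
    have hint : IntegrableOn (fun s : ℝ => C ^ 2 * s ^ (2 * α - 2)) (Ioc 0 h) := by
      have := (intervalIntegrable_iff_integrableOn_Ioc_of_le hh.le).mp
        (intervalIntegral.intervalIntegrable_rpow' (a := 0) (b := h)
          (by linarith : (-1:ℝ) < 2 * α - 2))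
      exact this.const_mul _
    have hmono : (∫ s in Ioc 0 h, |f s| ^ 2) ≤ ∫ s in Ioc 0 h, C ^ 2 * s ^ (2 * α - 2) := by
      refine integral_mono_of_nonneg (ae_of_all _ fun s => by positivity) hint ?_
      refine (ae_restrict_iff' measurableSet_Ioc).mpr (ae_of_all _ fun s hs => ?_)
      have h1 : |f s| ^ 2 ≤ (C * s ^ (α - 1)) ^ 2 :=
        pow_le_pow_left₀ (abs_nonneg _) (hf s hs.1) 2
      calc |f s| ^ 2 ≤ (C * s ^ (α - 1)) ^ 2 := h1
        _ = C ^ 2 * s ^ (2 * α - 2) := by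
            rw [mul_pow, sq_rpow s hs.1.le]; ring_nf
    have hcomp : (∫ s in Ioc 0 h, C ^ 2 * s ^ (2 * α - 2)) = C ^ 2 * K1 * h ^ (2 * α - 1) := by
      rw [integral_const_mul, ← intervalIntegral.integral_of_le hh.le,
        integral_rpow (Or.inl (by linarith : (-1:ℝ) < 2 * α - 2))]
      rw [Real.zero_rpow (by linarith : 2 * α - 2 + 1 ≠ 0)]
      have : 2 * α - 2 + 1 = 2 * α - 1 := by ring
      rw [this, hK1def]; ring
    rw [intervalIntegral.integral_of_le hh.le]
    refine hmono.trans ?_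
    rw [hcomp]
    have hpow : 0 ≤ h ^ (2 * α - 1) := Real.rpow_nonneg hh.le _
    have : C ^ 2 * K1 ≤ (2 * C + 1) ^ 2 * (K1 + K2 + 1) := by nlinarith
    exact mul_le_mul_of_nonneg_right this hpow
  · -- part (b)
    intro h hh s hs
    refine (keyb h hh s hs).trans (mul_le_mul_of_nonneg_right ?_ ?_)
    · nlinarith
    · have h1 : 0 ≤ s ^ (α - 1) := Real.rpow_nonneg hs.le _
      have h2 : 0 ≤ h * s ^ (α - 2) := by positivity
      exact le_min h1 h2
  · -- part (c)
    intro h hh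
    set G : ℝ → ℝ := fun s => |f (h + s) - f s| ^ 2 with hGdef
    have hGcont : ContinuousOn G (Ioi 0) := by
      have h1 : ContinuousOn (fun s : ℝ => f (h + s)) (Ioi 0) := by
        refine hcontf.comp (continuous_const.add continuous_id).continuousOn ?_
        intro x hx
        have : (0:ℝ) < x := hx
        simpa using by linarith
      exact ((h1.sub hcontf).abs.pow 2)
    -- bounds
    have hbd1 : ∀ s ∈ Ioc (0:ℝ) h, G s ≤ (2 * C) ^ 2 * s ^ (2 * α - 2) := by
      intro s hs
      have hkey := keyb h hh s hs.1
      have hmin : (2 * C) * min (s ^ (α - 1)) (h * s ^ (α - 2)) ≤ (2 * C) * s ^ (α - 1) :=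
        mul_le_mul_of_nonneg_left (min_le_left _ _) (by positivity)
      have h1 : |f (h + s) - f s| ≤ (2 * C) * s ^ (α - 1) := hkey.trans hmin
      calc G s ≤ ((2 * C) * s ^ (α - 1)) ^ 2 := pow_le_pow_left₀ (abs_nonneg _) h1 2
        _ = (2 * C) ^ 2 * s ^ (2 * α - 2) := by
            rw [mul_pow, sq_rpow s hs.1.le]; ring_nf
    have hbd2 : ∀ s ∈ Ioi h, G s ≤ (2 * C * h) ^ 2 * s ^ (2 * α - 4) := by
      intro s hs
      have hspos : (0:ℝ) < s := lt_trans hh hs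
      have hkey := keyb h hh s hspos
      have hmin : (2 * C) * min (s ^ (α - 1)) (h * s ^ (α - 2)) ≤ (2 * C) * (h * s ^ (α - 2)) :=
        mul_le_mul_of_nonneg_left (min_le_right _ _) (by positivity)
      have h1 : |f (h + s) - f s| ≤ (2 * C * h) * s ^ (α - 2) := by
        refine (hkey.trans hmin).trans (le_of_eq ?_); ring
      calc G s ≤ ((2 * C * h) * s ^ (α - 2)) ^ 2 := pow_le_pow_left₀ (abs_nonneg _) h1 2
        _ = (2 * C * h) ^ 2 * s ^ (2 * α - 4) := by
            rw [mul_pow, sq_rpow s hspos.le]; ring_nf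
    -- integrability of dominating functions
    have hint1 : IntegrableOn (fun s : ℝ => (2 * C) ^ 2 * s ^ (2 * α - 2)) (Ioc 0 h) := by
      have := (intervalIntegrable_iff_integrableOn_Ioc_of_le hh.le).mp
        (intervalIntegral.intervalIntegrable_rpow' (a := 0) (b := h)
          (by linarith : (-1:ℝ) < 2 * α - 2))
      exact this.const_mul _
    have hint2 : IntegrableOn (fun s : ℝ => (2 * C * h) ^ 2 * s ^ (2 * α - 4)) (Ioi h) :=
      (integrableOn_Ioi_rpow_of_lt (by linarith) hh).const_mul _
    -- integrability of G
    have hG1 : IntegrableOn G (Ioc 0 h) := by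
      refine Integrable.mono' hint1
        ((hGcont.mono Ioc_subset_Ioi_self).aestronglyMeasurable measurableSet_Ioc) ?_
      refine (ae_restrict_iff' measurableSet_Ioc).mpr (ae_of_all _ fun s hs => ?_)
      rw [Real.norm_eq_abs, abs_of_nonneg (by positivity)]
      exact hbd1 s hs
    have hG2 : IntegrableOn G (Ioi h) := by
      refine Integrable.mono' hint2
        ((hGcont.mono fun x hx => lt_trans hh hx).aestronglyMeasurable measurableSet_Ioi) ?_
      refine (ae_restrict_iff' measurableSet_Ioi).mpr (ae_of_all _ fun s hs => ?_)
      rw [Real.norm_eq_abs, abs_of_nonneg (by positivity)]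
      exact hbd2 s hs
    -- split the integral
    have hsplit : (∫ s in Ioi (0:ℝ), G s) = (∫ s in Ioc 0 h, G s) + ∫ s in Ioi h, G s := by
      rw [← Ioc_union_Ioi_eq_Ioi hh.le,
        setIntegral_union Ioc_disjoint_Ioi_same measurableSet_Ioi hG1 hG2]
    -- bound piece 1
    have hp1 : (∫ s in Ioc 0 h, G s) ≤ (2 * C) ^ 2 * K1 * h ^ (2 * α - 1) := by
      have hmono : (∫ s in Ioc 0 h, G s) ≤ ∫ s in Ioc 0 h, (2 * C) ^ 2 * s ^ (2 * α - 2) := by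
        refine integral_mono_of_nonneg (ae_of_all _ fun s => by positivity) hint1 ?_
        exact (ae_restrict_iff' measurableSet_Ioc).mpr (ae_of_all _ hbd1)
      refine hmono.trans (le_of_eq ?_)
      rw [integral_const_mul, ← intervalIntegral.integral_of_le hh.le,
        integral_rpow (Or.inl (by linarith : (-1:ℝ) < 2 * α - 2))]
      rw [Real.zero_rpow (by linarith : 2 * α - 2 + 1 ≠ 0)]
      have : 2 * α - 2 + 1 = 2 * α - 1 := by ring
      rw [this, hK1def]; ring
    -- bound piece 2
    have hp2 : (∫ s in Ioi h, G s) ≤ (2 * C) ^ 2 * K2 * h ^ (2 * α - 1) := by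
      have hmono : (∫ s in Ioi h, G s) ≤ ∫ s in Ioi h, (2 * C * h) ^ 2 * s ^ (2 * α - 4) := by
        refine integral_mono_of_nonneg (ae_of_all _ fun s => by positivity) hint2 ?_
        exact (ae_restrict_iff' measurableSet_Ioi).mpr (ae_of_all _ hbd2)
      refine hmono.trans (le_of_eq ?_)
      rw [integral_const_mul, integral_Ioi_rpow_of_lt (by linarith) hh]
      have he : 2 * α - 4 + 1 = 2 * α - 3 := by ring
      rw [he]
      have hpow : (h:ℝ) ^ (2:ℕ) * h ^ (2 * α - 3) = h ^ (2 * α - 1) := by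
        rw [← Real.rpow_natCast h 2, ← Real.rpow_add hh]
        norm_num
        congr 1
        ring
      have h23 : (2 * α - 3 : ℝ) ≠ 0 := by linarith
      have h32 : (3 - 2 * α : ℝ) ≠ 0 := by linarith
      rw [hK2def, ← hpow]
      field_simp
      ring
    show (∫ s in Ioi (0:ℝ), G s) ≤ _
    rw [hsplit]
    have hpow : 0 ≤ h ^ (2 * α - 1) := Real.rpow_nonneg hh.le _
    have hfin : (2 * C) ^ 2 * K1 + (2 * C) ^ 2 * K2 ≤ (2 * C + 1) ^ 2 * (K1 + K2 + 1) := by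
      nlinarith
    nlinarith [mul_le_mul_of_nonneg_right hfin hpow]
end
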